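/- Under the hypotheses of the induction lemma, if additionally ∑_{j=1}^{l+1} c_j > k (the greedy solution at step l+1 exceeds budget k) and α ∈ (0,1], then f(X'_{l+1}) ≥ (1 − 1/e^α)·OPT. -/

import Mathlib

/-- If additionally the greedy solution at step `l+1` exceeds the budget
(`∑ c_j > k`), then `f(X'_{l+1}) ≥ (1 − 1/e^α)·OPT`. -/
theorem stmt10 {α : Type*} [DecidableEq α] (f : Finset α → ℝ)
    (hnonneg : ∀ A, 0 ≤ f A)
    (hmono : ∀ A B : Finset α, A ⊆ B → f A ≤ f B)
    (hempty : f ∅ = 0)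
    (Xstar : Finset α) (OPT : ℝ) (hOPT : f Xstar = OPT)
    (l : ℕ) (X' : ℕ → Finset α) (hX0 : X' 0 = ∅)
    (hchain : ∀ i, i ≤ l → X' i ⊆ X' (i + 1))
    (c : ℕ → ℝ) (hcpos : ∀ i, 1 ≤ i → i ≤ l + 1 → 0 < c i)
    (a k : ℝ) (ha0 : 0 < a) (ha1 : a ≤ 1) (hk : 0 < k)
    (hstep : ∀ i, 1 ≤ i → i ≤ l + 1 →
      f (X' i) - f (X' (i - 1)) ≥ (c i * a / k) * (OPT - f (X' (i - 1))))
    (hbudget : ∑ j ∈ Finset.Icc 1 (l + 1), c j > k) :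
    f (X' (l + 1)) ≥ (1 - 1 / Real.exp a) * OPT := by
  have hOPT0 : 0 ≤ OPT := hOPT ▸ hnonneg Xstar
  have haux : ∀ d i, i + d ≤ l + 1 → X' i ⊆ X' (i + d) := by
    intro d
    induction d with
    | zero => intro i _; exact subset_rfl
    | succ m ih =>
      intro i h
      exact (ih i (by omega)).trans (by
        have := hchain (i + m) (by omega)
        simpa [Nat.add_assoc] using this)
  have hsub : ∀ i, i ≤ l + 1 → X' i ⊆ X' (l + 1) := by
    intro i hi
    obtain ⟨d, hd⟩ := Nat.le.dest hi
    rw [← hd]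
    exact haux d i (by omega)
  have hcoef : (1 - 1 / Real.exp a) ≤ 1 := by
    have := Real.exp_pos a
    have : 0 < 1 / Real.exp a := by positivity
    linarith
  by_cases hcase : ∃ i, i ≤ l + 1 ∧ OPT < f (X' i)
  · obtain ⟨i, hi, hlt⟩ := hcase
    have h1 : f (X' i) ≤ f (X' (l + 1)) := hmono _ _ (hsub i hi)
    nlinarith [Real.exp_pos a, one_div_pos.mpr (Real.exp_pos a)]
  · push_neg at hcase
    -- induction: OPT - f (X' i) ≤ OPT * exp (-(a/k) * ∑_{j=1}^i c j)
    have key : ∀ i, i ≤ l + 1 →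
        OPT - f (X' i) ≤ OPT * Real.exp (-(a / k) * ∑ j ∈ Finset.Icc 1 i, c j) := by
      intro i hi
      induction i with
      | zero => simp [hX0, hempty]
      | succ n ih =>
        have hn : n ≤ l + 1 := Nat.le_of_succ_le hi
        have ihn := ih hn
        have hDnn : 0 ≤ OPT - f (X' n) := by linarith [hcase n hn]
        have hs := hstep (n + 1) (Nat.le_add_left 1 n) hi
        simp only [Nat.add_sub_cancel] at hs
        set x := c (n + 1) * a / k with hx
        have h1 : OPT - f (X' (n + 1)) ≤ (1 - x) * (OPT - f (X' n)) := by
          nlinarith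
        have h2 : (1 - x) ≤ Real.exp (-x) := by
          have := Real.add_one_le_exp (-x); linarith
        have h3 : (1 - x) * (OPT - f (X' n)) ≤ Real.exp (-x) * (OPT - f (X' n)) :=
          mul_le_mul_of_nonneg_right h2 hDnn
        have h4 : Real.exp (-x) * (OPT - f (X' n)) ≤
            Real.exp (-x) * (OPT * Real.exp (-(a / k) * ∑ j ∈ Finset.Icc 1 n, c j)) :=
          mul_le_mul_of_nonneg_left ihn (Real.exp_pos _).le
        have hsum : ∑ j ∈ Finset.Icc 1 (n + 1), c j
            = (∑ j ∈ Finset.Icc 1 n, c j) + c (n + 1) :=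
          Finset.sum_Icc_succ_top (Nat.le_add_left 1 n) c
        have h5 : Real.exp (-x) * (OPT * Real.exp (-(a / k) * ∑ j ∈ Finset.Icc 1 n, c j))
            = OPT * Real.exp (-(a / k) * ∑ j ∈ Finset.Icc 1 (n + 1), c j) := by
          rw [hsum, mul_left_comm, ← Real.exp_add]
          have harg : -x + -(a / k) * ∑ j ∈ Finset.Icc 1 n, c j
              = -(a / k) * (∑ j ∈ Finset.Icc 1 n, c j + c (n + 1)) := by
            rw [hx]; field_simp; ring
          rw [harg]
        linarith [h1, h3, h4, h5.le, h5.ge]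
    have hfin := key (l + 1) le_rfl
    have hexp : Real.exp (-(a / k) * ∑ j ∈ Finset.Icc 1 (l + 1), c j) ≤ Real.exp (-a) := by
      apply Real.exp_le_exp.mpr
      have : a < (a / k) * ∑ j ∈ Finset.Icc 1 (l + 1), c j := by
        rw [div_mul_eq_mul_div, lt_div_iff₀ hk]
        nlinarith
      linarith
    have : OPT * Real.exp (-(a / k) * ∑ j ∈ Finset.Icc 1 (l + 1), c j)
        ≤ OPT * Real.exp (-a) := mul_le_mul_of_nonneg_left hexp hOPT0
    rw [Real.exp_neg] at this
    have : OPT - f (X' (l + 1)) ≤ OPT * (Real.exp a)⁻¹ := by linarith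
    have hrw : (1 - 1 / Real.exp a) * OPT = OPT - OPT * (Real.exp a)⁻¹ := by
      field_simp
    linarith [hrw.le, hrw.ge]
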